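/- Let C_a and C_b be n×n Hermitian positive definite complex matrices. Then the Jeffreys divergence J := tr{(C_b⁻¹ − C_a⁻¹)(C_a − C_b)} satisfies J ≥ 0, and J = 0 if and only if C_a = C_b. -/

import Mathlib

open Matrix
open scoped ComplexOrder

private lemma trace_mul_conjTranspose_re_nonneg {n : ℕ} (M : Matrix (Fin n) (Fin n) ℂ) :
    0 ≤ (Matrix.trace (M * Mᴴ)).re := by
  simp only [Matrix.trace, Matrix.diag, Matrix.mul_apply, Matrix.conjTranspose_apply,
    Complex.re_sum]
  refine Finset.sum_nonneg fun i _ => Finset.sum_nonneg fun j _ => ?_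
  rw [show star (M i j) = (starRingEnd ℂ) (M i j) from rfl, Complex.mul_conj]
  exact_mod_cast Complex.normSq_nonneg _

private lemma trace_mul_conjTranspose_re_eq_zero_iff {n : ℕ} (M : Matrix (Fin n) (Fin n) ℂ) :
    (Matrix.trace (M * Mᴴ)).re = 0 ↔ M = 0 := by
  constructor
  · intro h
    have h' : (∑ i, ∑ j, Complex.normSq (M i j)) = 0 := by
      have := h
      simp only [Matrix.trace, Matrix.diag, Matrix.mul_apply, Matrix.conjTranspose_apply,
        Complex.re_sum, RCLike.star_def, Complex.mul_conj, Complex.ofReal_re] at this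
      simpa using this
    ext i j
    have h1 := (Finset.sum_eq_zero_iff_of_nonneg (fun i _ =>
      Finset.sum_nonneg fun j _ => Complex.normSq_nonneg _)).mp h' i (Finset.mem_univ i)
    have h2 := (Finset.sum_eq_zero_iff_of_nonneg (fun j _ =>
      Complex.normSq_nonneg _)).mp h1 j (Finset.mem_univ j)
    simpa using Complex.normSq_eq_zero.mp h2
  · intro h
    simp [h]

/-- The Jeffreys divergence `J := tr{(Cb⁻¹ − Ca⁻¹)(Ca − Cb)}` between two Hermitian positive
definite covariance matrices satisfies `J ≥ 0`, with `J = 0` if and only if `Ca = Cb`. -/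
theorem jeffreys_nonneg_and_eq_zero_iff {n : ℕ} (Ca Cb : Matrix (Fin n) (Fin n) ℂ)
    (ha : Ca.PosDef) (hb : Cb.PosDef) :
    0 ≤ (Matrix.trace ((Cb⁻¹ - Ca⁻¹) * (Ca - Cb))).re ∧
      ((Matrix.trace ((Cb⁻¹ - Ca⁻¹) * (Ca - Cb))).re = 0 ↔ Ca = Cb) := by
  have hadet : IsUnit Ca.det := (Matrix.isUnit_iff_isUnit_det _).mp ha.isUnit
  have hbdet : IsUnit Cb.det := (Matrix.isUnit_iff_isUnit_det _).mp hb.isUnit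
  set D : Matrix (Fin n) (Fin n) ℂ := Ca - Cb with hD
  have hainv := ha.inv
  have hbinv := hb.inv
  open scoped MatrixOrder in set S := CFC.sqrt Ca⁻¹ with hS
  open scoped MatrixOrder in set T := CFC.sqrt Cb⁻¹ with hT
  open scoped MatrixOrder in have hSS : S * S = Ca⁻¹ := CFC.sqrt_mul_sqrt_self _ hainv.posSemidef.nonneg
  open scoped MatrixOrder in have hTT : T * T = Cb⁻¹ := CFC.sqrt_mul_sqrt_self _ hbinv.posSemidef.nonneg
  open scoped MatrixOrder in have hSherm : Sᴴ = S := (CFC.sqrt_nonneg _).posSemidef.isHermitian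
  open scoped MatrixOrder in have hTherm : Tᴴ = T := (CFC.sqrt_nonneg _).posSemidef.isHermitian
  have hDherm : Dᴴ = D := by
    rw [hD, Matrix.conjTranspose_sub, ha.isHermitian, hb.isHermitian]
  set M := T * D * S with hM
  have hMH : Mᴴ = S * (D * T) := by
    rw [hM, Matrix.conjTranspose_mul, Matrix.conjTranspose_mul, hSherm, hTherm, hDherm]
  -- key identity: Cb⁻¹ - Ca⁻¹ = Cb⁻¹ * D * Ca⁻¹
  have hkey : Cb⁻¹ - Ca⁻¹ = Cb⁻¹ * D * Ca⁻¹ := by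
    rw [hD, Matrix.mul_sub, Matrix.sub_mul, Matrix.mul_assoc Cb⁻¹ Ca Ca⁻¹,
      Matrix.mul_nonsing_inv _ hadet, Matrix.nonsing_inv_mul _ hbdet, mul_one, one_mul]
  have htr : Matrix.trace ((Cb⁻¹ - Ca⁻¹) * D) = Matrix.trace (M * Mᴴ) := by
    rw [hkey, ← hSS, ← hTT]
    have h1 : T * T * D * (S * S) * D = T * (T * D * (S * (S * D))) := by
      simp only [Matrix.mul_assoc]
    have h2 : M * Mᴴ = T * D * (S * (S * (D * T))) := by
      rw [hM, hMH]; simp only [Matrix.mul_assoc]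
    rw [h1, Matrix.trace_mul_comm, h2]
    simp only [Matrix.mul_assoc]
  have hMzero : M = 0 → D = 0 := by
    intro h
    have h1 : T * M * S = Cb⁻¹ * D * Ca⁻¹ := by
      rw [hM, ← hSS, ← hTT]; simp only [Matrix.mul_assoc]
    have h2 : Cb * (T * M * S) * Ca = D := by
      rw [h1]
      calc Cb * (Cb⁻¹ * D * Ca⁻¹) * Ca = Cb * Cb⁻¹ * D * (Ca⁻¹ * Ca) := by
            simp only [Matrix.mul_assoc]
        _ = D := by
            rw [Matrix.mul_nonsing_inv _ hbdet, Matrix.nonsing_inv_mul _ hadet, one_mul, mul_one]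
    rw [← h2, h]; simp
  rw [htr]
  refine ⟨trace_mul_conjTranspose_re_nonneg M, ?_⟩
  rw [trace_mul_conjTranspose_re_eq_zero_iff]
  constructor
  · intro h
    have := hMzero h
    rw [hD, sub_eq_zero] at this
    exact this
  · intro h
    rw [hM, hD, h, sub_self, Matrix.mul_zero, Matrix.zero_mul]
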